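/- Let L_G be the set of positive definite hermitian complex n×n matrices of determinant 1, and Ω = SU(n). Define A ∘ B ∈ L_G and d_{A,B} ∈ Ω by the unique decomposition AB = (A ∘ B)·d_{A,B}. Then (L_G, ∘) with identity I_n is a left Bol loop: A ∘ (B ∘ (A ∘ C)) = (A ∘ (B ∘ A)) ∘ C for all A, B, C ∈ L_G. -/

import Mathlib

open scoped ComplexOrder

/-- The set of positive definite hermitian complex `n × n` matrices of
determinant 1. -/
def LG (n : ℕ) : Set (Matrix (Fin n) (Fin n) ℂ) :=
  {A | A.PosDef ∧ A.det = 1}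

/-- The special unitary group `SU(n)`, as a set of matrices. -/
def SU (n : ℕ) : Set (Matrix (Fin n) (Fin n) ℂ) :=
  {u | u ∈ Matrix.unitaryGroup (Fin n) ℂ ∧ u.det = 1}

/-- The square of the positive part of a polar decomposition:
if `A B = P u` with `A, B, P` hermitian and `u` unitary, then `P ^ 2 = A * B ^ 2 * A`. -/
lemma sq_of_polar {n : ℕ} {A B P u : Matrix (Fin n) (Fin n) ℂ}
    (hA : A.IsHermitian) (hB : B.IsHermitian) (hP : P.IsHermitian)
    (hu : u ∈ Matrix.unitaryGroup (Fin n) ℂ) (h : A * B = P * u) :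
    P ^ 2 = A * B ^ 2 * A := by
  have huu : u * u.conjTranspose = 1 := by
    have := Matrix.mem_unitaryGroup_iff.mp hu
    rwa [Matrix.star_eq_conjTranspose] at this
  have key : (A * B) * star (A * B) = (P * u) * star (P * u) := by rw [h]
  simp only [StarMul.star_mul, Matrix.star_eq_conjTranspose, hA.eq, hB.eq, hP.eq] at key
  rw [show P * u * (u.conjTranspose * P) = P * (u * u.conjTranspose) * P by noncomm_ring, huu, mul_one] at key
  rw [sq, sq, ← key]
  noncomm_ring

open scoped MatrixOrder in
lemma Matrix.PosSemidef.eq_of_sq_eq_sq {n : ℕ} {A B : Matrix (Fin n) (Fin n) ℂ}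
    (hA : A.PosSemidef) (hB : B.PosSemidef) (h : A ^ 2 = B ^ 2) : A = B :=
  (CFC.sq_eq_sq_iff A B hA.nonneg hB.nonneg).mp h

/-- With `A ∘ B ∈ L_G` defined by the unique polar
decomposition `A·B = (A ∘ B)·d_{A,B}`, `d_{A,B} ∈ SU(n)`, the structure
`(L_G, ∘)` is a left Bol loop with identity `I_n`. -/
theorem stmt10 (n : ℕ)
    (circ : Matrix (Fin n) (Fin n) ℂ → Matrix (Fin n) (Fin n) ℂ → Matrix (Fin n) (Fin n) ℂ)
    (hcirc : ∀ A ∈ LG n, ∀ B ∈ LG n,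
      circ A B ∈ LG n ∧ ∃ u ∈ SU n, A * B = circ A B * u) :
    (∀ A ∈ LG n, circ 1 A = A ∧ circ A 1 = A) ∧
    (∀ A ∈ LG n, ∀ B ∈ LG n, ∀ C ∈ LG n,
      circ A (circ B (circ A C)) = circ (circ A (circ B A)) C) := by
  have hone : (1 : Matrix (Fin n) (Fin n) ℂ) ∈ LG n := ⟨Matrix.PosDef.one, Matrix.det_one⟩
  -- main consequence of `hcirc`: the square of `circ A B` is `A * B ^ 2 * A`
  have key : ∀ A ∈ LG n, ∀ B ∈ LG n,
      circ A B ∈ LG n ∧ (circ A B) ^ 2 = A * B ^ 2 * A := by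
    intro A hA B hB
    obtain ⟨hmem, u, ⟨hu, -⟩, hdecomp⟩ := hcirc A hA B hB
    exact ⟨hmem, sq_of_polar hA.1.1 hB.1.1 hmem.1.1 hu hdecomp⟩
  constructor
  · intro A hA
    constructor
    · obtain ⟨hmem, hsq⟩ := key 1 hone A hA
      refine hmem.1.posSemidef.eq_of_sq_eq_sq hA.1.posSemidef ?_
      rw [hsq]; noncomm_ring
    · obtain ⟨hmem, hsq⟩ := key A hA 1 hone
      refine hmem.1.posSemidef.eq_of_sq_eq_sq hA.1.posSemidef ?_
      rw [hsq]; noncomm_ring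
  · intro A hA B hB C hC
    obtain ⟨hAC, hACsq⟩ := key A hA C hC
    obtain ⟨hBAC, hBACsq⟩ := key B hB _ hAC
    obtain ⟨hL, hLsq⟩ := key A hA _ hBAC
    obtain ⟨hBA, hBAsq⟩ := key B hB A hA
    obtain ⟨hM, hMsq⟩ := key A hA _ hBA
    -- `circ A (circ B A) = A * B * A`
    have hABA : Matrix.PosSemidef (A * B * A) := by
      have := hB.1.posSemidef.conjTranspose_mul_mul_same A
      rwa [hA.1.1.eq] at this
    have hMeq : circ A (circ B A) = A * B * A := by
      refine hM.1.posSemidef.eq_of_sq_eq_sq hABA ?_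
      rw [hMsq, hBAsq]
      noncomm_ring
    obtain ⟨hR, hRsq⟩ := key _ hM C hC
    refine hL.1.posSemidef.eq_of_sq_eq_sq hR.1.posSemidef ?_
    rw [hLsq, hBACsq, hACsq, hRsq, hMeq]
    noncomm_ring
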